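/- (Tilted measure bounds for ball and backtracking region.) Let d ≥ 1, δ ∈ (0,1), b, λ, L > 0, and let ℓ, ℓ' be unit vectors with ℓ·ℓ' > √(1−δ²). Let m(dx) = e^{2λℓ·x} dx, B = the open Euclidean ball of radius (1∧b)L/4 centered at 0, V_{ℓ',δ} = {x : −bL < x·ℓ' < L, |Π_{ℓ'}(x)| < L/√δ}, and V⁻ = {x ∈ V_{ℓ',δ} : x·ℓ' < −(3/4)(1∧b)L}. Then for all L ≥ 1: (i) m(B) ≤ c L^d exp(λ(1∧b)L/2) with c depending only on b, d, λ; (ii) m(V⁻) ≤ c L^d exp(−(3/2)λ(1∧b)√(1−δ²) L + 2λ√δ L) with c depending only on δ, b, d, λ; and (iii) the Euclidean distance between B and V⁻ is at least (1/2)(1∧b)L. -/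

import Mathlib

open MeasureTheory Set
open scoped RealInnerProductSpace

noncomputable section

abbrev EucSp (d : ℕ) : Type := EuclideanSpace ℝ (Fin d)

/-- the cylinder `V_{ℓ',δ}` (with parameters `b`, `L`), radius `ρ`. -/
def cyl {d : ℕ} (ℓ' : EucSp d) (b L ρ : ℝ) : Set (EucSp d) :=
  {x | -(b * L) < ⟪x, ℓ'⟫ ∧ ⟪x, ℓ'⟫ < L ∧ ‖x - ⟪x, ℓ'⟫ • ℓ'‖ < ρ}

/-- the backtracked part `V⁻` of `V_{ℓ',δ}`. -/
def VminusG {d : ℕ} (ℓ' : EucSp d) (δ b L : ℝ) : Set (EucSp d) :=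
  {x ∈ cyl ℓ' b L (L / Real.sqrt δ) | ⟪x, ℓ'⟫ < -(3 / 4 * (min 1 b) * L)}

/-- Generic bound: integral of the tilt over a set inside a closed ball. -/
lemma key_bound {d : ℕ} (lam : ℝ) (ℓ : EucSp d) (S : Set (EucSp d)) (ρ C : ℝ) (hρ : 0 ≤ ρ)
    (hC0 : 0 ≤ C)
    (hsub : S ⊆ Metric.closedBall 0 ρ) (hC : ∀ x ∈ S, Real.exp (2*lam*⟪ℓ,x⟫) ≤ C) :
    ∫ x in S, Real.exp (2*lam*⟪ℓ,x⟫) ≤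
      C * (ρ ^ d * (volume (Metric.ball (0:EucSp d) 1)).toReal) := by
  have hcont : Continuous fun x : EucSp d => Real.exp (2*lam*⟪ℓ,x⟫) :=
    Real.continuous_exp.comp (continuous_const.mul (continuous_const.inner continuous_id))
  have hμS : volume S < ⊤ := lt_of_le_of_lt (measure_mono hsub) measure_closedBall_lt_top
  have h1 : ‖∫ x in S, Real.exp (2*lam*⟪ℓ,x⟫)‖ ≤ C * (volume S).toReal :=
    norm_setIntegral_le_of_norm_le_const hμS
      (fun x hx => by rw [Real.norm_eq_abs, abs_of_pos (Real.exp_pos _)]; exact hC x hx)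
  have h2 : (volume S).toReal ≤ ρ ^ d * (volume (Metric.ball (0:EucSp d) 1)).toReal := by
    have h3 : volume (Metric.closedBall (0:EucSp d) ρ)
        = ENNReal.ofReal (ρ ^ d) * volume (Metric.ball (0:EucSp d) 1) := by
      rw [Measure.addHaar_closedBall _ _ hρ, finrank_euclideanSpace_fin]
    have h4 : (volume S).toReal ≤ (volume (Metric.closedBall (0:EucSp d) ρ)).toReal :=
      ENNReal.toReal_mono measure_closedBall_lt_top.ne (measure_mono hsub)
    rw [h3, ENNReal.toReal_mul, ENNReal.toReal_ofReal (pow_nonneg hρ d)] at h4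
    exact h4
  calc ∫ x in S, Real.exp (2*lam*⟪ℓ,x⟫) ≤ ‖∫ x in S, Real.exp (2*lam*⟪ℓ,x⟫)‖ := le_abs_self _
    _ ≤ C * (volume S).toReal := h1
    _ ≤ _ := mul_le_mul_of_nonneg_left h2 hC0

set_option maxHeartbeats 1000000 in
theorem tilted_measure_bounds (d : ℕ) (hd : 1 ≤ d) (δ b lam : ℝ)
    (hδ0 : 0 < δ) (hδ1 : δ < 1) (hb : 0 < b) (hlam : 0 < lam) :
    -- (i) bound on `m(B)`
    (∃ c > (0:ℝ), ∀ ℓ ℓ' : EucSp d, ‖ℓ‖ = 1 → ‖ℓ'‖ = 1 →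
      Real.sqrt (1 - δ ^ 2) < ⟪ℓ, ℓ'⟫ → ∀ L ≥ (1:ℝ),
        ∫ x in Metric.ball (0 : EucSp d) (min 1 b * L / 4),
            Real.exp (2 * lam * ⟪ℓ, x⟫) ≤
          c * L ^ (d : ℝ) * Real.exp (lam * min 1 b * L / 2)) ∧
    -- (ii) bound on `m(V⁻)`
    (∃ c > (0:ℝ), ∀ ℓ ℓ' : EucSp d, ‖ℓ‖ = 1 → ‖ℓ'‖ = 1 →
      Real.sqrt (1 - δ ^ 2) < ⟪ℓ, ℓ'⟫ → ∀ L ≥ (1:ℝ),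
        ∫ x in VminusG ℓ' δ b L, Real.exp (2 * lam * ⟪ℓ, x⟫) ≤
          c * L ^ (d : ℝ) *
            Real.exp (-(3 / 2) * lam * min 1 b * Real.sqrt (1 - δ ^ 2) * L +
              2 * lam * Real.sqrt δ * L)) ∧
    -- (iii) distance bound
    (∀ ℓ ℓ' : EucSp d, ‖ℓ‖ = 1 → ‖ℓ'‖ = 1 →
      Real.sqrt (1 - δ ^ 2) < ⟪ℓ, ℓ'⟫ → ∀ L ≥ (1:ℝ),
      ∀ x ∈ Metric.ball (0 : EucSp d) (min 1 b * L / 4), ∀ y ∈ VminusG ℓ' δ b L,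
        1 / 2 * min 1 b * L ≤ dist x y) := by
  have hm0 : (0:ℝ) < min 1 b := lt_min one_pos hb
  have hm1 : min 1 b ≤ 1 := min_le_left _ _
  set K : ℝ := (volume (Metric.ball (0:EucSp d) 1)).toReal with hK
  have hK0 : 0 < K :=
    ENNReal.toReal_pos (Metric.measure_ball_pos volume 0 one_pos).ne' measure_ball_lt_top.ne
  have hsd : 0 < Real.sqrt δ := Real.sqrt_pos.mpr hδ0
  refine ⟨⟨K, hK0, ?_⟩, ⟨(b + 1 + 1 / Real.sqrt δ) ^ d * K,
      mul_pos (pow_pos (by positivity) d) hK0, ?_⟩, ?_⟩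
  · -- (i)
    intro ℓ ℓ' hℓ hℓ' hang L hL
    have hL0 : (0:ℝ) < L := lt_of_lt_of_le one_pos hL
    set r : ℝ := min 1 b * L / 4 with hr
    have hr0 : 0 ≤ r := by positivity
    have key := key_bound lam ℓ (Metric.ball (0:EucSp d) r) r
        (Real.exp (lam * min 1 b * L / 2)) hr0 (Real.exp_pos _).le
        (Metric.ball_subset_closedBall) ?_
    · have hrL : r ^ d ≤ L ^ d := by
        apply pow_le_pow_left₀ hr0
        rw [hr]; nlinarith
      have hrw : L ^ (d:ℝ) = L ^ d := Real.rpow_natCast L d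
      rw [hrw]
      nlinarith [Real.exp_pos (lam * min 1 b * L / 2), mul_le_mul_of_nonneg_right hrL hK0.le]
    · intro x hx
      have hx' : ‖x‖ < r := by simpa [dist_zero_right] using hx
      apply Real.exp_le_exp.mpr
      have hinner : ⟪ℓ, x⟫ ≤ ‖x‖ := by
        have := real_inner_le_norm ℓ x
        rwa [hℓ, one_mul] at this
      have : 2 * lam * ⟪ℓ, x⟫ ≤ 2 * lam * r := by nlinarith
      rw [hr] at this; linarith
  · -- (ii)
    intro ℓ ℓ' hℓ hℓ' hang L hL
    have hL0 : (0:ℝ) < L := lt_of_lt_of_le one_pos hL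
    set q : ℝ := Real.sqrt (1 - δ ^ 2) with hqdef
    have hq0 : 0 ≤ q := Real.sqrt_nonneg _
    have hqsq : q ^ 2 = 1 - δ ^ 2 := Real.sq_sqrt (by nlinarith)
    set s : ℝ := ⟪ℓ, ℓ'⟫ with hsdef
    have hs1 : s ≤ 1 := by
      have := real_inner_le_norm ℓ ℓ'; rwa [hℓ, hℓ', one_mul] at this
    have hqs : q < s := hang
    set ρ : ℝ := (b + 1 + 1 / Real.sqrt δ) * L with hρdef
    set E : ℝ := Real.exp (-(3 / 2) * lam * min 1 b * q * L + 2 * lam * Real.sqrt δ * L)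
      with hEdef
    have key := key_bound lam ℓ (VminusG ℓ' δ b L) ρ E (by positivity) (Real.exp_pos _).le ?_ ?_
    · have hrw : L ^ (d:ℝ) = L ^ d := Real.rpow_natCast L d
      rw [hrw]
      have : ρ ^ d = (b + 1 + 1 / Real.sqrt δ) ^ d * L ^ d := by rw [hρdef, mul_pow]
      rw [this] at key
      calc ∫ x in VminusG ℓ' δ b L, Real.exp (2 * lam * ⟪ℓ, x⟫)
          ≤ E * ((b + 1 + 1 / Real.sqrt δ) ^ d * L ^ d * K) := key
        _ = (b + 1 + 1 / Real.sqrt δ) ^ d * K * L ^ d * E := by ring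
    · -- inclusion in the closed ball
      intro x hx
      obtain ⟨⟨h1, h2, h3⟩, h4⟩ := hx
      set t : ℝ := ⟪x, ℓ'⟫ with htdef
      have habs : |t| ≤ b * L + L := by
        rw [abs_le]; constructor <;> nlinarith
      have hxnorm : ‖x‖ ≤ ρ := by
        have hdec : ‖x‖ ≤ ‖t • ℓ'‖ + ‖x - t • ℓ'‖ := by
          have := norm_add_le (t • ℓ') (x - t • ℓ')
          simpa [add_sub_cancel] using this
        have hsm : ‖t • ℓ'‖ = |t| := by rw [norm_smul, hℓ', Real.norm_eq_abs, mul_one]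
        rw [hsm] at hdec
        rw [hρdef]
        have hexp : (b + 1 + 1 / Real.sqrt δ) * L = b * L + L + L / Real.sqrt δ := by ring
        linarith [h3, habs, hdec]
      simpa [Metric.mem_closedBall, dist_zero_right] using hxnorm
    · -- pointwise exponential bound
      intro x hx
      obtain ⟨⟨h1, h2, h3⟩, h4⟩ := hx
      set t : ℝ := ⟪x, ℓ'⟫ with htdef
      set y : EucSp d := x - t • ℓ' with hydef
      apply Real.exp_le_exp.mpr
      -- ⟪ℓ', y⟫ = 0
      have hperp : ⟪ℓ', y⟫ = 0 := by
        rw [hydef, inner_sub_right, real_inner_smul_right, real_inner_self_eq_norm_sq, hℓ',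
          real_inner_comm]
        ring
      -- decomposition of ⟪ℓ, x⟫
      have hdecomp : ⟪ℓ, x⟫ = t * s + ⟪ℓ, y⟫ := by
        rw [hydef, inner_sub_right, real_inner_smul_right, hsdef]; ring
      -- ⟪ℓ, y⟫ = ⟪ℓ - s•ℓ', y⟫
      have hinneq : ⟪ℓ, y⟫ = ⟪ℓ - s • ℓ', y⟫ := by
        rw [inner_sub_left, real_inner_smul_left, hperp]; ring
      -- ‖ℓ - s•ℓ'‖ ≤ δ
      have hnsub : ‖ℓ - s • ℓ'‖ ≤ δ := by
        have hsq2 : ‖ℓ - s • ℓ'‖ ^ 2 = 1 - s ^ 2 := by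
          rw [norm_sub_sq_real, hℓ, real_inner_smul_right, norm_smul, hℓ', Real.norm_eq_abs]
          rw [← hsdef]
          rw [mul_one, sq_abs]
          ring
        have h1s : 1 - s ^ 2 ≤ δ ^ 2 := by nlinarith
        nlinarith [norm_nonneg (ℓ - s • ℓ'), sq_nonneg (‖ℓ - s • ℓ'‖ - δ)]
      -- ⟪ℓ, y⟫ ≤ √δ * L
      have hy : ⟪ℓ, y⟫ ≤ Real.sqrt δ * L := by
        have hcs : ⟪ℓ - s • ℓ', y⟫ ≤ ‖ℓ - s • ℓ'‖ * ‖y‖ := real_inner_le_norm _ _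
        have hyL : ‖y‖ ≤ L / Real.sqrt δ := le_of_lt h3
        have hprod : ‖ℓ - s • ℓ'‖ * ‖y‖ ≤ δ * (L / Real.sqrt δ) :=
          mul_le_mul hnsub hyL (norm_nonneg _) hδ0.le
        have heq : δ * (L / Real.sqrt δ) = Real.sqrt δ * L := by
          have h5 : Real.sqrt δ * Real.sqrt δ = δ := Real.mul_self_sqrt hδ0.le
          field_simp
          nlinarith [h5]
        rw [hinneq]; rw [heq] at hprod; linarith
      -- t * s ≤ -(3/4 m L) * q
      have hts : t * s ≤ -(3 / 4 * min 1 b * L) * q := by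
        have ht0 : t ≤ 0 := by nlinarith
        have h6 : t * s ≤ t * q := mul_le_mul_of_nonpos_left hqs.le ht0
        have h7 : t * q ≤ -(3 / 4 * min 1 b * L) * q :=
          mul_le_mul_of_nonneg_right h4.le hq0
        linarith
      rw [hdecomp]
      nlinarith [hts, hy]
  · -- (iii)
    intro ℓ ℓ' hℓ hℓ' hang L hL x hx y hy
    obtain ⟨⟨h1, h2, h3⟩, h4⟩ := hy
    have hx' : ‖x‖ < min 1 b * L / 4 := by simpa [dist_zero_right] using hx
    have hxin : -(min 1 b * L / 4) < ⟪x, ℓ'⟫ := by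
      have := abs_real_inner_le_norm x ℓ'
      rw [hℓ', mul_one] at this
      have := abs_le.mp this
      linarith [this.1]
    have hcs : ⟪x - y, ℓ'⟫ ≤ ‖x - y‖ := by
      have := real_inner_le_norm (x - y) ℓ'
      rwa [hℓ', mul_one] at this
    have hexp : ⟪x - y, ℓ'⟫ = ⟪x, ℓ'⟫ - ⟪y, ℓ'⟫ := inner_sub_left x y ℓ'
    rw [dist_eq_norm]
    have hm1 : min 1 b ≤ 1 := min_le_left _ _
    nlinarith [hcs, hexp, h4, hxin]
end
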